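/- Adaptive sequential composition: if κ₁ satisfies ε₁-DP, and κ₂ is a family of mechanisms indexed by the output of κ₁ such that for each fixed output value y, the mechanism D ↦ κ₂(y, D) satisfies ε₂-DP, then the mechanism D ↦ (let y = κ₁(D); (y, κ₂(y, D))) satisfies (ε₁ + ε₂)-differential privacy. -/

import Mathlib

/-- ε-DP for discrete (countable-output) mechanisms given as probability mass
functions: for every set S of outputs, the probability mass of S changes by at
most a factor `exp ε` between neighboring datasets. -/
def PMFDP {D Y : Type*} (neighbor : D → D → Prop) (κ : D → PMF Y) (ε : ℝ) : Prop :=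
  ∀ d₁ d₂, neighbor d₁ d₂ → ∀ S : Set Y,
    ∑' y : S, κ d₁ y ≤ ENNReal.ofReal (Real.exp ε) * ∑' y : S, κ d₂ y

lemma PMFDP.apply_le {D Y : Type*} {neighbor : D → D → Prop} {κ : D → PMF Y} {ε : ℝ}
    (h : PMFDP neighbor κ ε) {d₁ d₂ : D} (hn : neighbor d₁ d₂) (y : Y) :
    κ d₁ y ≤ ENNReal.ofReal (Real.exp ε) * κ d₂ y := by
  have := h d₁ d₂ hn {y}
  simpa [tsum_singleton] using this

lemma comp_apply {D Y Z : Type*} (κ₁ : D → PMF Y) (κ₂ : Y → D → PMF Z) (d : D) (p : Y × Z) :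
    ((κ₁ d).bind fun y => (κ₂ y d).map fun z => (y, z)) p = κ₁ d p.1 * κ₂ p.1 d p.2 := by
  rw [PMF.bind_apply]
  rw [tsum_eq_single p.1]
  · congr 1
    rw [PMF.map_apply]
    rw [tsum_eq_single p.2]
    · simp
    · intro z hz
      simp [Prod.ext_iff, hz.symm]
  · intro y hy
    rw [PMF.map_apply]
    convert mul_zero _
    rw [ENNReal.summable.tsum_eq_zero_iff]
    intro z
    simp [Prod.ext_iff, hy.symm]

/-- Adaptive sequential composition: if κ₁ is ε₁-DP and, for each fixed output
y of κ₁, the mechanism `D ↦ κ₂ y D` is ε₂-DP, then the adaptively composed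
mechanism releasing `(y, κ₂(y, D))` is (ε₁+ε₂)-DP. -/
theorem dp_adaptive_composition {D Y Z : Type*} [Countable Y] [Countable Z]
    (neighbor : D → D → Prop)
    (κ₁ : D → PMF Y) (κ₂ : Y → D → PMF Z) (ε₁ ε₂ : ℝ)
    (h₁ : PMFDP neighbor κ₁ ε₁)
    (h₂ : ∀ y : Y, PMFDP neighbor (κ₂ y) ε₂) :
    PMFDP neighbor
      (fun d => (κ₁ d).bind fun y => (κ₂ y d).map fun z => (y, z)) (ε₁ + ε₂) := by
  intro d₁ d₂ hn S
  calc ∑' p : S, ((κ₁ d₁).bind fun y => (κ₂ y d₁).map fun z => (y, z)) p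
      ≤ ∑' p : S, ENNReal.ofReal (Real.exp (ε₁ + ε₂)) *
          ((κ₁ d₂).bind fun y => (κ₂ y d₂).map fun z => (y, z)) p := by
        refine ENNReal.tsum_le_tsum fun p => ?_
        rw [comp_apply, comp_apply, Real.exp_add,
          ENNReal.ofReal_mul (Real.exp_nonneg _)]
        calc κ₁ d₁ (p : Y × Z).1 * κ₂ (p : Y × Z).1 d₁ (p : Y × Z).2
            ≤ (ENNReal.ofReal (Real.exp ε₁) * κ₁ d₂ (p : Y × Z).1) *
              (ENNReal.ofReal (Real.exp ε₂) * κ₂ (p : Y × Z).1 d₂ (p : Y × Z).2) :=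
              mul_le_mul' (h₁.apply_le hn _) ((h₂ _).apply_le hn _)
          _ = _ := by ring
    _ = _ := ENNReal.tsum_mul_left
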